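/- arXiv:2603.00930 — 2 statements merged into one kernel-verified Lean document; each statement's English description precedes it below -/
import Mathlib

section
/- Let $\kappa \in \mathbb{N}$, $\varepsilon \in (0,1)$, $\gamma \in (0,\varepsilon)$, $m \ge 2$, and suppose $\sigma \le (\varepsilon - \gamma)\kappa \log_2 m$. Let $P_c$ be any quantity satisfying $P_c \le \Pr[E < e_0] + m^{r+1-e_0}$ where $E \sim \mathrm{Bin}(\kappa,\varepsilon)$, $r = \lfloor \sigma/\log_2 m \rfloor$, and $e_0 = \lfloor r + 1 + \gamma\kappa/2 \rfloor$. Then $P_c \le e^{-\gamma^2 \kappa / 2} + m^{1 - \gamma\kappa/2}$. -/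
open Finset Real

lemma bernoulli_hoeffding (p : ℝ) (hp0 : 0 < p) (hp1 : p < 1) (t : ℝ) (ht : 0 ≤ t) :
    1 - p + p * Real.exp (-t) ≤ Real.exp (-t * p + t ^ 2 / 8) := by
  set D : ℝ → ℝ := fun s => 1 - p + p * Real.exp (-s) with hDdef
  have hD : ∀ s, 0 < D s := fun s => by
    have : 0 < p * Real.exp (-s) := by positivity
    simp only [hDdef]; linarith
  have hu : ∀ s : ℝ, HasDerivAt (fun s => p * Real.exp (-s)) (-(p * Real.exp (-s))) s := by
    intro s
    have h1 : HasDerivAt (fun s : ℝ => Real.exp (-s)) (Real.exp (-s) * (-1)) s :=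
      (Real.hasDerivAt_exp (-s)).comp s ((hasDerivAt_id s).neg)
    have := h1.const_mul p
    exact this.congr_deriv (by ring)
  have hD' : ∀ s : ℝ, HasDerivAt D (-(p * Real.exp (-s))) s := fun s => by
    exact (((hasDerivAt_const s (1 - p)).add (hu s)).congr_deriv (by ring))
  set g : ℝ → ℝ := fun s => -p + s / 4 + p * Real.exp (-s) / D s with hgdef
  have hg : ∀ s : ℝ, HasDerivAt g
      (1 / 4 + ((-(p * Real.exp (-s)) * D s - p * Real.exp (-s) * (-(p * Real.exp (-s)))) / (D s) ^ 2)) s := by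
    intro s
    have hq : HasDerivAt (fun s => p * Real.exp (-s) / D s)
        ((-(p * Real.exp (-s)) * D s - p * Real.exp (-s) * (-(p * Real.exp (-s)))) / (D s) ^ 2) s :=
      (hu s).div (hD' s) (ne_of_gt (hD s))
    have h2 : HasDerivAt (fun s : ℝ => -p + s / 4) (1 / 4) s := by
      simpa [Pi.add_def] using (hasDerivAt_const s (-p)).add ((hasDerivAt_id s).div_const 4)
    exact h2.add hq
  have hg' : ∀ s : ℝ, 0 ≤ 1 / 4 + ((-(p * Real.exp (-s)) * D s - p * Real.exp (-s) * (-(p * Real.exp (-s)))) / (D s) ^ 2) := by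
    intro s
    set q : ℝ := p * Real.exp (-s) / D s with hq
    have key : 1 / 4 + ((-(p * Real.exp (-s)) * D s - p * Real.exp (-s) * (-(p * Real.exp (-s)))) / (D s) ^ 2)
        = (q - 1 / 2) ^ 2 := by
      have := (hD s).ne'
      rw [hq]
      field_simp
      ring
    rw [key]; positivity
  have hgmono : Monotone g :=
    monotone_of_deriv_nonneg (fun s => (hg s).differentiableAt)
      (fun s => by rw [(hg s).deriv]; exact hg' s)
  have hg0 : g 0 = 0 := by
    simp only [hgdef, hDdef, neg_zero, Real.exp_zero, mul_one]
    have h1 : (1 : ℝ) - p + p = 1 := by ring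
    rw [h1]
    norm_num
  have hgnn : ∀ s, 0 ≤ s → 0 ≤ g s := fun s hs => hg0 ▸ hgmono hs
  set f : ℝ → ℝ := fun s => -s * p + s ^ 2 / 8 - Real.log (D s) with hfdef
  have hf : ∀ s : ℝ, HasDerivAt f (g s) s := by
    intro s
    have h1 : HasDerivAt (fun s : ℝ => -s * p) (-1 * p) s := ((hasDerivAt_id s).neg).mul_const p
    have h2 : HasDerivAt (fun s : ℝ => s ^ 2 / 8) ((2 : ℕ) * s ^ 1 / 8) s :=
      (hasDerivAt_pow 2 s).div_const 8
    have h3 : HasDerivAt (fun s => Real.log (D s)) (-(p * Real.exp (-s)) / D s) s :=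
      (hD' s).log (ne_of_gt (hD s))
    have := (h1.add h2).sub h3
    refine this.congr_deriv ?_
    simp only [hgdef]
    field_simp
    ring
  have hfmono : MonotoneOn f (Set.Ici 0) := by
    apply monotoneOn_of_deriv_nonneg (convex_Ici 0)
      (Continuous.continuousOn (by
        have : Differentiable ℝ f := fun s => (hf s).differentiableAt
        exact this.continuous))
      (fun s _ => ((hf s).differentiableAt).differentiableWithinAt)
    intro s hs
    rw [(hf s).deriv]
    rw [interior_Ici] at hs
    exact hgnn s (le_of_lt hs)
  have hf0 : f 0 = 0 := by
    simp only [hfdef, hDdef, neg_zero, Real.exp_zero, mul_one]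
    have h1 : (1 : ℝ) - p + p = 1 := by ring
    rw [h1]
    simp
  have hft : 0 ≤ f t := by
    have := hfmono (Set.self_mem_Ici) (Set.mem_Ici.mpr ht) ht
    rw [hf0] at this; exact this
  have hlog : Real.log (D t) ≤ -t * p + t ^ 2 / 8 := by
    simp only [hfdef] at hft; linarith
  exact (Real.log_le_iff_le_exp (hD t)).mp hlog

/-- Strong converse for coded caching: if `σ ≤ (ε-γ)κ log₂ m` and
`P_c ≤ Pr[E < e₀] + m^{r+1-e₀}` with `E ~ Bin(κ,ε)`, `r = ⌊σ/log₂ m⌋`,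
`e₀ = ⌊r + 1 + γκ/2⌋`, then `P_c ≤ e^{-γ²κ/2} + m^{1-γκ/2}`. -/
theorem strong_converse_coded (κ : ℕ) (ε γ σ : ℝ) (m : ℕ)
    (hε : ε ∈ Set.Ioo (0:ℝ) 1) (hγ : γ ∈ Set.Ioo (0:ℝ) ε)
    (hm : 2 ≤ m) (hσ0 : 0 ≤ σ)
    (hσ : σ ≤ (ε - γ) * κ * Real.logb 2 m)
    (r : ℕ) (hr : r = Nat.floor (σ / Real.logb 2 m))
    (e₀ : ℕ) (he₀ : e₀ = Nat.floor ((r : ℝ) + 1 + γ * κ / 2))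
    (Pc : ℝ)
    (hPc : Pc ≤ (∑ e ∈ Finset.range (κ + 1),
                  if e < e₀ then (κ.choose e : ℝ) * ε ^ e * (1 - ε) ^ (κ - e) else 0)
              + (m : ℝ) ^ ((r : ℝ) + 1 - (e₀ : ℝ))) :
    Pc ≤ Real.exp (-γ ^ 2 * κ / 2) + (m : ℝ) ^ ((1 : ℝ) - γ * κ / 2) := by
  obtain ⟨hε0, hε1⟩ := hε
  obtain ⟨hγ0, hγε⟩ := hγ
  have hm1 : (1 : ℝ) ≤ m := by exact_mod_cast Nat.one_le_of_lt hm
  have hlogb : 0 < Real.logb 2 m := Real.logb_pos (by norm_num) (by exact_mod_cast hm)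
  -- r ≤ (ε-γ)κ
  have hrle : (r : ℝ) ≤ (ε - γ) * κ := by
    have h1 : (r : ℝ) ≤ σ / Real.logb 2 m := by
      rw [hr]; exact Nat.floor_le (by positivity)
    have h2 : σ / Real.logb 2 m ≤ (ε - γ) * κ := by
      rw [div_le_iff₀ hlogb]; exact hσ
    linarith
  have he₀le : (e₀ : ℝ) ≤ (r : ℝ) + 1 + γ * κ / 2 := by
    rw [he₀]; exact Nat.floor_le (by positivity)
  have he₀gt : (r : ℝ) + 1 + γ * κ / 2 - 1 < (e₀ : ℝ) := by
    rw [he₀]; exact Nat.sub_one_lt_floor _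
  set L : ℝ := 2 * γ with hL
  set a : ℝ := ε * κ - γ * κ / 2 with ha
  have h1ε : (0 : ℝ) ≤ 1 - ε := by linarith
  -- first term
  have hsum : (∑ e ∈ Finset.range (κ + 1),
      if e < e₀ then (κ.choose e : ℝ) * ε ^ e * (1 - ε) ^ (κ - e) else 0)
      ≤ Real.exp (-γ ^ 2 * κ / 2) := by
    have step1 : (∑ e ∈ Finset.range (κ + 1),
        if e < e₀ then (κ.choose e : ℝ) * ε ^ e * (1 - ε) ^ (κ - e) else 0)
        ≤ ∑ e ∈ Finset.range (κ + 1),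
          (κ.choose e : ℝ) * ε ^ e * (1 - ε) ^ (κ - e) * Real.exp (L * (a - e)) := by
      apply Finset.sum_le_sum
      intro e _
      split
      · next hee =>
        have hea : (e : ℝ) ≤ a := by
          have : (e : ℝ) + 1 ≤ (e₀ : ℝ) := by exact_mod_cast Nat.succ_le_of_lt hee
          rw [ha]; linarith
        have hpmf : (0 : ℝ) ≤ (κ.choose e : ℝ) * ε ^ e * (1 - ε) ^ (κ - e) := by positivity
        have hexp : (1 : ℝ) ≤ Real.exp (L * (a - e)) := by
          apply Real.one_le_exp
          apply mul_nonneg (by rw [hL]; linarith)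
          linarith
        exact le_mul_of_one_le_right hpmf hexp
      · positivity
    have step2 : (∑ e ∈ Finset.range (κ + 1),
        (κ.choose e : ℝ) * ε ^ e * (1 - ε) ^ (κ - e) * Real.exp (L * (a - e)))
        = Real.exp (L * a) * (ε * Real.exp (-L) + (1 - ε)) ^ κ := by
      rw [add_pow, Finset.mul_sum]
      apply Finset.sum_congr rfl
      intro e _
      have hexp : Real.exp (L * (a - (e : ℝ))) = Real.exp (L * a) * Real.exp (-L) ^ e := by
        rw [← Real.exp_nat_mul, ← Real.exp_add]
        congr 1; ring
      rw [hexp, mul_pow]; ring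
    have hbase : ε * Real.exp (-L) + (1 - ε) ≤ Real.exp (-L * ε + L ^ 2 / 8) := by
      have := bernoulli_hoeffding ε hε0 hε1 L (by rw [hL]; linarith)
      linarith
    have hpow : (ε * Real.exp (-L) + (1 - ε)) ^ κ ≤ Real.exp ((κ : ℝ) * (-L * ε + L ^ 2 / 8)) := by
      rw [Real.exp_nat_mul]
      apply pow_le_pow_left₀ (by positivity) hbase
    calc (∑ e ∈ Finset.range (κ + 1),
        if e < e₀ then (κ.choose e : ℝ) * ε ^ e * (1 - ε) ^ (κ - e) else 0)
        ≤ Real.exp (L * a) * (ε * Real.exp (-L) + (1 - ε)) ^ κ := by rw [← step2]; exact step1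
      _ ≤ Real.exp (L * a) * Real.exp ((κ : ℝ) * (-L * ε + L ^ 2 / 8)) :=
          mul_le_mul_of_nonneg_left hpow (le_of_lt (Real.exp_pos _))
      _ = Real.exp (-γ ^ 2 * κ / 2) := by
          rw [← Real.exp_add]; congr 1; rw [hL, ha]; ring
  have h2 : (m : ℝ) ^ ((r : ℝ) + 1 - (e₀ : ℝ)) ≤ (m : ℝ) ^ ((1 : ℝ) - γ * κ / 2) :=
    Real.rpow_le_rpow_of_exponent_le hm1 (by linarith)
  linarith
end

section
/- Let $\varepsilon \in (0, 1/2]$ and define on $E \in (0, |\log_2(1-\varepsilon)|)$ the functions $\rho_{\mathrm{unc}}(E) = 1 - E/|\log_2(1-\varepsilon)|$ and $\rho_{\mathrm{code}}(E)$, the unique $\rho \in (\varepsilon, 1]$ with $D(\rho\|\varepsilon) = E$, where $D(p\|q) = p\log_2(p/q) + (1-p)\log_2((1-p)/(1-q))$. Then the ratio $h(E) = \rho_{\mathrm{unc}}(E)/\rho_{\mathrm{code}}(E)$ satisfies: (i) $h$ is strictly decreasing; (ii) $\lim_{E\to 0^+} h(E) = 1/\varepsilon$; (iii) $h(E) \to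 0$ as $E \to |\log_2(1-\varepsilon)|$; (iv) there is a unique $E^*$ in the interval with $h(E^*) = 1$. -/
open Real Filter Set

/-- Auxiliary: the KL divergence numerator (times `log 2`). -/
noncomputable def klF (ε : ℝ) : ℝ → ℝ := fun p =>
  p * Real.log p + (1 - p) * Real.log (1 - p) - p * Real.log ε - (1 - p) * Real.log (1 - ε)

lemma klF_continuous (ε : ℝ) : Continuous (klF ε) := by
  unfold klF
  have h1 : Continuous fun p : ℝ => p * Real.log p := Real.continuous_mul_log
  have h2 : Continuous fun p : ℝ => (1 - p) * Real.log (1 - p) :=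
    Real.continuous_mul_log.comp (continuous_const.sub continuous_id)
  fun_prop

lemma klF_hasDerivAt (ε : ℝ) {x : ℝ} (hx : x ≠ 0) (h1x : 1 - x ≠ 0) :
    HasDerivAt (klF ε)
      (Real.log x - Real.log (1 - x) - Real.log ε + Real.log (1 - ε)) x := by
  have h2 : HasDerivAt (fun p : ℝ => 1 - p) (-1) x := (hasDerivAt_id x).const_sub 1
  have h1 : HasDerivAt (fun p : ℝ => p * Real.log p) (Real.log x + 1) x :=
    Real.hasDerivAt_mul_log hx
  have h3 : HasDerivAt (fun p : ℝ => (1 - p) * Real.log (1 - p))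
      ((Real.log (1 - x) + 1) * (-1)) x :=
    (Real.hasDerivAt_mul_log h1x).comp x h2
  have h4 : HasDerivAt (fun p : ℝ => p * Real.log ε) (Real.log ε) x := by
    simpa using (hasDerivAt_id x).mul_const (Real.log ε)
  have h5 : HasDerivAt (fun p : ℝ => (1 - p) * Real.log (1 - ε)) (-Real.log (1 - ε)) x := by
    simpa using h2.mul_const (Real.log (1 - ε))
  have := ((h1.add h3).sub h4).sub h5
  exact this.congr_deriv (by ring)

lemma klF_strictMonoOn (ε : ℝ) (hε : 0 < ε) (hε1 : ε < 1) :
    StrictMonoOn (klF ε) (Set.Icc ε 1) := by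
  apply strictMonoOn_of_deriv_pos (convex_Icc ε 1) (klF_continuous ε).continuousOn
  intro x hx
  rw [interior_Icc] at hx
  have hx0 : (0:ℝ) < x := lt_trans hε hx.1
  have h1x : (0:ℝ) < 1 - x := by linarith [hx.2]
  rw [(klF_hasDerivAt ε (ne_of_gt hx0) (ne_of_gt h1x)).deriv]
  have l1 : Real.log ε < Real.log x := Real.log_lt_log hε hx.1
  have l2 : Real.log (1 - x) < Real.log (1 - ε) := Real.log_lt_log h1x (by linarith [hx.1])
  linarith

/-- Maximum error exponent gap.  With `L = |log₂(1-ε)|`,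
`ρ_unc(E) = 1 - E/L`, and `ρ_code(E)` the unique `ρ ∈ (ε,1]` with
`D(ρ‖ε) = E`, the ratio `h = ρ_unc/ρ_code`:
(i) is strictly decreasing on `(0,L)`; (ii) tends to `1/ε` as `E → 0⁺`;
(iii) tends to `0` as `E → L⁻`; (iv) crosses `1` at a unique `E* ∈ (0,L)`. -/
theorem max_error_exponent_gap (ε : ℝ) (hε : 0 < ε) (hε2 : ε ≤ 1 / 2)
    (D : ℝ → ℝ)
    (hD : ∀ p, D p = p * Real.logb 2 (p / ε) + (1 - p) * Real.logb 2 ((1 - p) / (1 - ε)))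
    (L : ℝ) (hL : L = |Real.logb 2 (1 - ε)|)
    (ρcode : ℝ → ℝ)
    (hρcode : ∀ E ∈ Set.Ioo (0:ℝ) L, ρcode E ∈ Set.Ioc ε 1 ∧ D (ρcode E) = E)
    (ρunc : ℝ → ℝ) (hρunc : ∀ E, ρunc E = 1 - E / L)
    (h : ℝ → ℝ) (hh : ∀ E, h E = ρunc E / ρcode E) :
    StrictAntiOn h (Set.Ioo 0 L)
    ∧ Tendsto h (nhdsWithin 0 (Set.Ioi 0)) (nhds (1 / ε))
    ∧ Tendsto h (nhdsWithin L (Set.Iio L)) (nhds 0)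
    ∧ ∃! Estar : ℝ, Estar ∈ Set.Ioo (0:ℝ) L ∧ h Estar = 1 := by
  have hε1 : ε < 1 := by linarith
  have h1ε : (0:ℝ) < 1 - ε := by linarith
  have hlogb : Real.logb 2 (1 - ε) < 0 := Real.logb_neg one_lt_two h1ε (by linarith)
  have hLpos : 0 < L := by rw [hL, abs_of_neg hlogb]; linarith
  have hlog2 : (0:ℝ) < Real.log 2 := Real.log_pos one_lt_two
  set Dc : ℝ → ℝ := fun p => klF ε p / Real.log 2 with hDcdef
  -- D agrees with Dc on (0, 1]
  have hDeq : ∀ p : ℝ, 0 < p → p ≤ 1 → D p = Dc p := by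
    intro p hp0 hp1
    rw [hD, hDcdef]
    have hlog1 : Real.log (p / ε) = Real.log p - Real.log ε :=
      Real.log_div (ne_of_gt hp0) (ne_of_gt hε)
    rcases eq_or_lt_of_le hp1 with rfl | hlt
    · simp [Real.logb, klF, hlog1]
    · have h1p : (0:ℝ) < 1 - p := by linarith
      have hlog2' : Real.log ((1 - p) / (1 - ε)) = Real.log (1 - p) - Real.log (1 - ε) :=
        Real.log_div (ne_of_gt h1p) (ne_of_gt h1ε)
      simp only [Real.logb, hlog1, hlog2', klF]
      ring
  have hDcmono : StrictMonoOn Dc (Set.Icc ε 1) := by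
    intro x hx y hy hxy
    have := klF_strictMonoOn ε hε hε1 hx hy hxy
    exact div_lt_div_of_pos_right this hlog2
  have hDcε : Dc ε = 0 := by simp [hDcdef, klF]
  -- basic facts about ρcode
  have hρmem : ∀ E ∈ Set.Ioo (0:ℝ) L, ρcode E ∈ Set.Ioc ε 1 := fun E hE => (hρcode E hE).1
  have hρIcc : ∀ E ∈ Set.Ioo (0:ℝ) L, ρcode E ∈ Set.Icc ε 1 := fun E hE =>
    ⟨le_of_lt (hρmem E hE).1, (hρmem E hE).2⟩
  have hρpos : ∀ E ∈ Set.Ioo (0:ℝ) L, 0 < ρcode E := fun E hE =>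
    lt_trans hε (hρmem E hE).1
  have hρD : ∀ E ∈ Set.Ioo (0:ℝ) L, Dc (ρcode E) = E := by
    intro E hE
    rw [← hDeq _ (hρpos E hE) (hρmem E hE).2]
    exact (hρcode E hE).2
  have hρmono : ∀ E1 ∈ Set.Ioo (0:ℝ) L, ∀ E2 ∈ Set.Ioo (0:ℝ) L, E1 < E2 →
      ρcode E1 < ρcode E2 := by
    intro E1 h1 E2 h2 h12
    rw [← hDcmono.lt_iff_lt (hρIcc E1 h1) (hρIcc E2 h2), hρD E1 h1, hρD E2 h2]
    exact h12
  -- (i) strict anti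
  have hanti : StrictAntiOn h (Set.Ioo 0 L) := by
    intro E1 h1 E2 h2 h12
    rw [hh, hh, hρunc, hρunc]
    have hn2 : 0 < 1 - E2 / L := by
      have : E2 / L < 1 := (div_lt_one hLpos).2 h2.2
      linarith
    have hnlt : 1 - E2 / L < 1 - E1 / L := by
      have : E1 / L < E2 / L := div_lt_div_of_pos_right h12 hLpos
      linarith
    have hd1 : 0 < ρcode E1 := hρpos E1 h1
    have hd2 : 0 < ρcode E2 := hρpos E2 h2
    have hdlt : ρcode E1 < ρcode E2 := hρmono E1 h1 E2 h2 h12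
    rw [div_lt_div_iff₀ hd2 hd1]
    nlinarith
  refine ⟨hanti, ?_, ?_, ?_⟩
  -- (ii) limit at 0⁺
  · have hρtend : Tendsto ρcode (nhdsWithin 0 (Set.Ioi 0)) (nhds ε) := by
      rw [tendsto_order]
      constructor
      · intro a ha
        filter_upwards [Ioo_mem_nhdsGT_of_mem (left_mem_Ico.2 hLpos)] with E hE
        exact lt_trans ha (hρmem E hE).1
      · intro b hb
        set ρδ : ℝ := min ((ε + b) / 2) ((ε + 1) / 2) with hρδ
        have hδ1 : ε < ρδ := lt_min (by linarith) (by linarith)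
        have hδ2 : ρδ < 1 := lt_of_le_of_lt (min_le_right _ _) (by linarith)
        have hδb : ρδ < b := lt_of_le_of_lt (min_le_left _ _) (by linarith)
        have hδIcc : ρδ ∈ Set.Icc ε 1 := ⟨le_of_lt hδ1, le_of_lt hδ2⟩
        have hDδ : 0 < Dc ρδ := by
          have := hDcmono (left_mem_Icc.2 (le_of_lt hε1)) hδIcc hδ1
          rwa [hDcε] at this
        have hm : (0:ℝ) < min (Dc ρδ) L := lt_min hDδ hLpos
        filter_upwards [Ioo_mem_nhdsGT_of_mem (left_mem_Ico.2 hm)] with E hE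
        have hEIoo : E ∈ Set.Ioo (0:ℝ) L :=
          ⟨hE.1, lt_of_lt_of_le hE.2 (min_le_right _ _)⟩
        have hlt : Dc (ρcode E) < Dc ρδ := by
          rw [hρD E hEIoo]; exact lt_of_lt_of_le hE.2 (min_le_left _ _)
        have : ρcode E < ρδ := (hDcmono.lt_iff_lt (hρIcc E hEIoo) hδIcc).1 hlt
        linarith
    have hnum : Tendsto (fun E : ℝ => 1 - E / L) (nhdsWithin 0 (Set.Ioi 0)) (nhds 1) := by
      have : Tendsto (fun E : ℝ => 1 - E / L) (nhds 0) (nhds (1 - 0 / L)) :=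
        ((continuous_const.sub (continuous_id.div_const L)).tendsto 0)
      simp only [zero_div, sub_zero] at this
      exact this.mono_left nhdsWithin_le_nhds
    have := hnum.div hρtend (ne_of_gt hε)
    have hfun : h = fun E => (1 - E / L) / ρcode E := by
      funext E; rw [hh, hρunc]
    rw [hfun]
    exact this
  -- (iii) limit at L⁻
  · have hbound : Tendsto (fun E : ℝ => (1 - E / L) / ε) (nhdsWithin L (Set.Iio L)) (nhds 0) := by
      have : Tendsto (fun E : ℝ => (1 - E / L) / ε) (nhds L) (nhds ((1 - L / L) / ε)) :=
        (((continuous_const.sub (continuous_id.div_const L)).div_const ε).tendsto L)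
      rw [div_self (ne_of_gt hLpos), sub_self, zero_div] at this
      exact this.mono_left nhdsWithin_le_nhds
    apply tendsto_of_tendsto_of_tendsto_of_le_of_le' tendsto_const_nhds hbound
    · filter_upwards [Ioo_mem_nhdsLT_of_mem (right_mem_Ioc.2 hLpos)] with E hE
      rw [hh, hρunc]
      have : E / L < 1 := (div_lt_one hLpos).2 hE.2
      exact div_nonneg (by linarith) (le_of_lt (hρpos E hE))
    · filter_upwards [Ioo_mem_nhdsLT_of_mem (right_mem_Ioc.2 hLpos)] with E hE
      rw [hh, hρunc]
      have h1 : E / L < 1 := (div_lt_one hLpos).2 hE.2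
      gcongr
      · exact le_of_lt (hρmem E hE).1
  -- (iv) unique crossing
  · have hb : (0:ℝ) ≤ L * (1 - ε) := le_of_lt (mul_pos hLpos h1ε)
    set g : ℝ → ℝ := fun E => Dc (1 - E / L) - E with hgdef
    have hgcont : ContinuousOn g (Set.Icc 0 (L * (1 - ε))) := by
      apply Continuous.continuousOn
      exact (((klF_continuous ε).comp
        (continuous_const.sub (continuous_id.div_const L))).div_const _).sub continuous_id
    have hg0 : 0 < g 0 := by
      have : g 0 = Dc 1 := by simp [hgdef]
      rw [this]
      have hDc1 : Dc 1 = -Real.log ε / Real.log 2 := by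
        simp [hDcdef, klF, Real.log_one, Real.log_zero]
      rw [hDc1]
      have hlε : Real.log ε < 0 := Real.log_neg hε hε1
      apply div_pos (by linarith) hlog2
    have hgb : g (L * (1 - ε)) < 0 := by
      have harg : 1 - L * (1 - ε) / L = ε := by
        field_simp
        ring
      rw [hgdef]
      simp only
      rw [harg, hDcε]
      simp
      nlinarith
    have hmem : (0:ℝ) ∈ Set.Ioo (g (L * (1 - ε))) (g 0) := ⟨hgb, hg0⟩
    obtain ⟨Estar, hEstar, hgE⟩ := intermediate_value_Ioo' hb hgcont hmem
    have hE1 : Estar ∈ Set.Ioo (0:ℝ) L := by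
      refine ⟨hEstar.1, lt_of_lt_of_le hEstar.2 ?_⟩
      nlinarith
    have hρs : 1 - Estar / L ∈ Set.Ioo ε 1 := by
      constructor
      · have : Estar / L < 1 - ε := (div_lt_iff₀ hLpos).2 (by nlinarith [hEstar.2])
        linarith
      · have : 0 < Estar / L := div_pos hEstar.1 hLpos
        linarith
    have hDcρs : Dc (1 - Estar / L) = Estar := by
      have : g Estar = 0 := hgE
      rw [hgdef] at this
      simp only at this
      linarith
    have hρeq : ρcode Estar = 1 - Estar / L := by
      apply hDcmono.injOn (hρIcc Estar hE1) ⟨le_of_lt hρs.1, le_of_lt hρs.2⟩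
      rw [hρD Estar hE1, hDcρs]
    have hhE : h Estar = 1 := by
      rw [hh, hρunc, hρeq, div_self]
      have : ε < 1 - Estar / L := hρs.1
      linarith
    refine ⟨Estar, ⟨hE1, hhE⟩, ?_⟩
    rintro E' ⟨hE', hhE'⟩
    rcases lt_trichotomy E' Estar with hlt | heq | hgt
    · exfalso
      have := hanti hE' hE1 hlt
      rw [hhE, hhE'] at this
      exact lt_irrefl 1 this
    · exact heq
    · exfalso
      have := hanti hE1 hE' hgt
      rw [hhE, hhE'] at this
      exact lt_irrefl 1 this
end
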